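/- The function Q̄ : ℝ² → ℝ defined by Q̄(μ,τ) = (μ²+τ²)²/μ² for |μ| > |τ| and Q̄(μ,τ) = 4τ² for |μ| ≤ |τ| is convex on ℝ². -/
import Mathlib


/-- The extended Sadowsky energy density. -/
noncomputable def Qbar (μ τ : ℝ) : ℝ :=
  if |τ| < |μ| then (μ ^ 2 + τ ^ 2) ^ 2 / μ ^ 2 else 4 * τ ^ 2

lemma qbar_ge_lin (r μ τ : ℝ) (hr : r ^ 2 ≤ 1) :
    ((1 - r ^ 2) * μ + 2 * r * τ) ^ 2 ≤ Qbar μ τ := by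
  unfold Qbar
  split_ifs with h
  · have habs : 0 < |μ| := lt_of_le_of_lt (abs_nonneg τ) h
    have hμ : 0 < μ ^ 2 := by rw [← sq_abs]; positivity
    rw [le_div_iff₀ hμ]
    nlinarith [mul_nonneg (sq_nonneg (r * μ - τ)) (sq_nonneg (r * μ + τ)),
      mul_nonneg (mul_nonneg (sub_nonneg.mpr hr) (sq_nonneg μ)) (sq_nonneg (r * μ - τ))]
  · push_neg at h
    have hs : |r| ≤ 1 := by
      rw [← sq_le_one_iff_abs_le_one]; exact hr
    have habs : |(1 - r ^ 2) * μ + 2 * r * τ| ≤ 2 * |τ| := by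
      calc |(1 - r ^ 2) * μ + 2 * r * τ| ≤ |(1 - r ^ 2) * μ| + |2 * r * τ| := abs_add_le _ _
        _ = (1 - r ^ 2) * |μ| + 2 * |r| * |τ| := by
            rw [abs_mul, abs_mul, abs_mul, abs_of_nonneg (sub_nonneg.mpr hr), abs_two]
        _ ≤ 2 * |τ| := by
            nlinarith [abs_nonneg μ, abs_nonneg τ, abs_nonneg r, sq_abs r, h,
              sq_nonneg (1 - |r|), mul_nonneg (abs_nonneg r) (sub_nonneg.mpr hs),
              mul_nonneg (sub_nonneg.mpr hs) (sub_nonneg.mpr h)]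
    calc ((1 - r ^ 2) * μ + 2 * r * τ) ^ 2 = |(1 - r ^ 2) * μ + 2 * r * τ| ^ 2 := (sq_abs _).symm
      _ ≤ (2 * |τ|) ^ 2 := by gcongr
      _ = 4 * τ ^ 2 := by rw [mul_pow, sq_abs]; norm_num

lemma qbar_eq_lin (μ τ : ℝ) :
    ∃ r : ℝ, r ^ 2 ≤ 1 ∧ Qbar μ τ = ((1 - r ^ 2) * μ + 2 * r * τ) ^ 2 := by
  unfold Qbar
  split_ifs with h
  · refine ⟨τ / μ, ?_, ?_⟩
    · have hμ : 0 < |μ| := lt_of_le_of_lt (abs_nonneg τ) h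
      have h2 : τ ^ 2 ≤ μ ^ 2 := by
        rw [← sq_abs τ, ← sq_abs μ]
        nlinarith [abs_nonneg τ]
      have hμ2 : 0 < μ ^ 2 := by rw [← sq_abs]; positivity
      rw [div_pow, div_le_one hμ2]
      exact h2
    · have hμ : μ ≠ 0 := by
        intro h0
        rw [h0, abs_zero] at h
        exact absurd h (not_lt.mpr (abs_nonneg τ))
      field_simp
      ring
  · exact ⟨1, by norm_num, by ring⟩

/-- The extended Sadowsky energy density `Q̄` is convex on `ℝ²`. -/
theorem qbar_convex : ConvexOn ℝ Set.univ (fun p : ℝ × ℝ => Qbar p.1 p.2) := by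
  refine ⟨convex_univ, ?_⟩
  rintro ⟨μ₁, τ₁⟩ - ⟨μ₂, τ₂⟩ - a b ha hb hab
  simp only [Prod.smul_mk, Prod.mk_add_mk, smul_eq_mul]
  obtain ⟨r, hr, heq⟩ := qbar_eq_lin (a * μ₁ + b * μ₂) (a * τ₁ + b * τ₂)
  rw [heq]
  have h1 := qbar_ge_lin r μ₁ τ₁ hr
  have h2 := qbar_ge_lin r μ₂ τ₂ hr
  have key : ((1 - r ^ 2) * (a * μ₁ + b * μ₂) + 2 * r * (a * τ₁ + b * τ₂)) ^ 2
      ≤ a * ((1 - r ^ 2) * μ₁ + 2 * r * τ₁) ^ 2 + b * ((1 - r ^ 2) * μ₂ + 2 * r * τ₂) ^ 2 := by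
    nlinarith [sq_nonneg (((1 - r ^ 2) * μ₁ + 2 * r * τ₁) - ((1 - r ^ 2) * μ₂ + 2 * r * τ₂)),
      mul_nonneg ha hb]
  calc ((1 - r ^ 2) * (a * μ₁ + b * μ₂) + 2 * r * (a * τ₁ + b * τ₂)) ^ 2
      ≤ a * ((1 - r ^ 2) * μ₁ + 2 * r * τ₁) ^ 2 + b * ((1 - r ^ 2) * μ₂ + 2 * r * τ₂) ^ 2 := key
    _ ≤ a * Qbar μ₁ τ₁ + b * Qbar μ₂ τ₂ := by
        gcongr
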